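/- There exists a 2-page rique layout of K_7, and K_7 admits no 1-page rique layout; hence sq(K_7) = 2. -/

import Mathlib

variable {V : Type*}

/-- A `k`-page rique layout of `G`: a linear vertex order and a (symmetric)
assignment of edges to `k` pages such that within each page the order avoids
the rique forbidden pattern P.1. -/
def RiqueLayout (G : SimpleGraph V) (k : ℕ) : Prop :=
  ∃ (f : V → ℕ) (page : V → V → Fin k),
    Function.Injective f ∧ (∀ u v, page u v = page v u) ∧
    ∀ a a' b b' c c', G.Adj a a' → G.Adj b b' → G.Adj c c' →
      page a a' = page b b' → page b b' = page c c' →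
      ¬ (f a < f b ∧ f b < f c ∧ f c < f b' ∧ f b' < f a' ∧ f b' < f c')

/-- The rique-number of `G`. -/
noncomputable def riqueNumber (G : SimpleGraph V) : ℕ :=
  sInf {k | RiqueLayout G k}

/-- A concrete symmetric 2-page assignment for `K_7`. -/
def K7page (u v : Fin 7) : Fin 2 :=
  if (min u v, max u v) ∈
      [((1 : Fin 7), (4 : Fin 7)), (2, 4), (2, 5), (2, 6), (3, 6), (4, 6)]
    then 1 else 0

set_option maxHeartbeats 1000000 in
lemma K7layout2 : RiqueLayout (SimpleGraph.completeGraph (Fin 7)) 2 := by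
  have key : ∀ a a' b b' c c' : Fin 7,
      a.val < b.val → b.val < c.val → c.val < b'.val → b'.val < a'.val →
      b'.val < c'.val →
      ¬ (K7page a a' = K7page b b' ∧ K7page b b' = K7page c c') := by decide
  refine ⟨Fin.val, K7page, Fin.val_injective, by decide, ?_⟩
  rintro a a' b b' c c' - - - hp hq ⟨h1, h2, h3, h4, h5⟩
  exact key a a' b b' c c' h1 h2 h3 h4 h5 ⟨hp, hq⟩

lemma K7no1 : ¬ RiqueLayout (SimpleGraph.completeGraph (Fin 7)) 1 := by
  rintro ⟨f, page, hf, -, h⟩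
  set σ := Tuple.sort f with hσ
  have hmono : StrictMono (f ∘ σ) :=
    (Tuple.monotone_sort f).strictMono_of_injective (hf.comp σ.injective)
  have hne : ∀ i j : Fin 7, i ≠ j → σ i ≠ σ j := fun i j hij => by
    simpa using σ.injective.ne hij
  have := h (σ 0) (σ 4) (σ 1) (σ 3) (σ 2) (σ 5)
    (hne 0 4 (by decide)) (hne 1 3 (by decide)) (hne 2 5 (by decide))
    (Subsingleton.elim _ _) (Subsingleton.elim _ _)
  exact this ⟨hmono (by decide), hmono (by decide), hmono (by decide),
    hmono (by decide), hmono (by decide)⟩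

lemma K7no0 : ¬ RiqueLayout (SimpleGraph.completeGraph (Fin 7)) 0 := by
  rintro ⟨f, page, -⟩
  exact (page 0 0).elim0

/-- `K_7` admits a 2-page rique layout but no 1-page rique layout;
hence its rique-number is 2. -/
theorem riqueNumber_K7 :
    RiqueLayout (SimpleGraph.completeGraph (Fin 7)) 2 ∧
    ¬ RiqueLayout (SimpleGraph.completeGraph (Fin 7)) 1 ∧
    riqueNumber (SimpleGraph.completeGraph (Fin 7)) = 2 := by
  refine ⟨K7layout2, K7no1, ?_⟩
  unfold riqueNumber
  have h2 : 2 ∈ {k | RiqueLayout (SimpleGraph.completeGraph (Fin 7)) k} := K7layout2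
  refine le_antisymm (Nat.sInf_le h2) ?_
  by_contra hlt
  push_neg at hlt
  have hmem := Nat.sInf_mem ⟨2, h2⟩
  have h01 : sInf {k | RiqueLayout (SimpleGraph.completeGraph (Fin 7)) k} = 0 ∨
      sInf {k | RiqueLayout (SimpleGraph.completeGraph (Fin 7)) k} = 1 := by omega
  rcases h01 with h | h <;> rw [h] at hmem
  · exact K7no0 hmem
  · exact K7no1 hmem
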